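/- Let α > 0 and let ω ∈ L¹(0,∞). Define φ(z) = ∫₀^z G₋(y,z)ω(y) dy + ∫_z^∞ G₊(y,z)ω(y) dy where G_±(y,z) = -(1/(2α))(e^{±α(z-y)} - e^{-α(y+z)}). Then φ satisfies φ(0) = 0 and the pointwise bounds |αφ(z)| ≤ ‖ω‖_{L¹} and |∂_z φ(z)| ≤ ‖ω‖_{L¹} for all z ≥ 0; moreover, if ω is continuous then φ'' - α²φ = ω on (0,∞). -/

import Mathlib

open MeasureTheory

namespace LaplaceModeAux

open Set Filter Metric
open scoped Topology

/-- `|e^s - e^t| ≤ e^M |s - t|` when `s, t ≤ M`. -/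
lemma exp_lip (M s t : ℝ) (hs : s ≤ M) (ht : t ≤ M) :
    |Real.exp s - Real.exp t| ≤ Real.exp M * |s - t| := by
  rcases le_total s t with h | h
  · have h1 : s - t + 1 ≤ Real.exp (s - t) := Real.add_one_le_exp _
    have h2 : Real.exp t - Real.exp s = Real.exp t * (1 - Real.exp (s - t)) := by
      rw [mul_sub, mul_one, ← Real.exp_add]; ring_nf
    have h3 : Real.exp t ≤ Real.exp M := Real.exp_le_exp.2 ht
    have h4 : Real.exp s ≤ Real.exp t := Real.exp_le_exp.2 h
    rw [abs_of_nonpos (by linarith), abs_of_nonpos (by linarith)]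
    have h5 : (0:ℝ) < Real.exp t := Real.exp_pos _
    nlinarith
  · have h1 : t - s + 1 ≤ Real.exp (t - s) := Real.add_one_le_exp _
    have h2 : Real.exp s - Real.exp t = Real.exp s * (1 - Real.exp (t - s)) := by
      rw [mul_sub, mul_one, ← Real.exp_add]; ring_nf
    have h3 : Real.exp s ≤ Real.exp M := Real.exp_le_exp.2 hs
    have h4 : Real.exp t ≤ Real.exp s := Real.exp_le_exp.2 h
    rw [abs_of_nonneg (by linarith), abs_of_nonneg (by linarith)]
    have h5 : (0:ℝ) < Real.exp s := Real.exp_pos _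
    nlinarith

/-- The combined Green's kernel. -/
noncomputable def Kk (α y z : ℝ) : ℝ :=
  -(1 / (2 * α)) * (Real.exp (-α * |z - y|) - Real.exp (-α * (y + z)))

/-- The `z`-derivative of the kernel. -/
noncomputable def Dk (α y z : ℝ) : ℝ :=
  if y ≤ z then (1/2) * (Real.exp (-α * (z - y)) - Real.exp (-α * (y + z)))
  else -(1/2) * (Real.exp (-α * (y - z)) + Real.exp (-α * (y + z)))

lemma Kk_abs_le {α : ℝ} (hα : 0 < α) {y z : ℝ} (hy : 0 < y) (hz : 0 ≤ z) :
    |Kk α y z| ≤ 1 / (2 * α) := by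
  have h1 : Real.exp (-α * |z - y|) ≤ 1 := by
    apply Real.exp_le_one_iff.2; nlinarith [abs_nonneg (z - y)]
  have h2 : Real.exp (-α * (y + z)) ≤ 1 := by
    apply Real.exp_le_one_iff.2; nlinarith
  have h3 : (0:ℝ) < Real.exp (-α * |z - y|) := Real.exp_pos _
  have h4 : (0:ℝ) < Real.exp (-α * (y + z)) := Real.exp_pos _
  have hc : (0:ℝ) < 1 / (2 * α) := by positivity
  unfold Kk
  rw [abs_mul, abs_neg, abs_of_pos hc]
  have : |Real.exp (-α * |z - y|) - Real.exp (-α * (y + z))| ≤ 1 := by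
    rw [abs_le]; constructor <;> nlinarith
  nlinarith

lemma Dk_abs_le {α : ℝ} (hα : 0 < α) {y z : ℝ} (hy : 0 < y) (hz : 0 ≤ z) :
    |Dk α y z| ≤ 1 := by
  unfold Dk
  split_ifs with h
  · have h1 : Real.exp (-α * (z - y)) ≤ 1 := by
      apply Real.exp_le_one_iff.2; nlinarith
    have h2 : Real.exp (-α * (y + z)) ≤ 1 := by
      apply Real.exp_le_one_iff.2; nlinarith
    have h3 : (0:ℝ) < Real.exp (-α * (z - y)) := Real.exp_pos _
    have h4 : (0:ℝ) < Real.exp (-α * (y + z)) := Real.exp_pos _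
    have h5 : |Real.exp (-α * (z - y)) - Real.exp (-α * (y + z))| ≤ 1 := by
      rw [abs_le]; constructor <;> nlinarith
    rw [abs_mul, abs_of_pos (by norm_num : (0:ℝ) < 1/2)]
    linarith
  · push_neg at h
    have h1 : Real.exp (-α * (y - z)) ≤ 1 := by
      apply Real.exp_le_one_iff.2; nlinarith
    have h2 : Real.exp (-α * (y + z)) ≤ 1 := by
      apply Real.exp_le_one_iff.2; nlinarith
    have h3 : (0:ℝ) < Real.exp (-α * (y - z)) := Real.exp_pos _
    have h4 : (0:ℝ) < Real.exp (-α * (y + z)) := Real.exp_pos _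
    rw [abs_mul, abs_neg, abs_of_pos (by norm_num : (0:ℝ) < 1/2),
      abs_of_pos (by positivity)]
    nlinarith

variable {α : ℝ} {ω φ : ℝ → ℝ}

lemma Dk_meas (α z : ℝ) : Measurable (fun y => Dk α y z) := by
  unfold Dk
  exact Measurable.ite (measurableSet_le measurable_id measurable_const)
    (by fun_prop) (by fun_prop)

lemma Kk_int (hα : 0 < α) (hω : IntegrableOn ω (Set.Ioi 0)) {z : ℝ} (hz : 0 ≤ z) :
    Integrable (fun y => Kk α y z * ω y) (volume.restrict (Set.Ioi 0)) := by
  apply Integrable.mono' (hω.norm.const_mul (1 / (2*α)))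
  · exact ((by unfold Kk; fun_prop : Continuous (fun y => Kk α y z)).aestronglyMeasurable).mul
      hω.aestronglyMeasurable
  · refine (ae_restrict_iff' measurableSet_Ioi).2 (ae_of_all _ fun y hy => ?_)
    rw [norm_mul]
    exact mul_le_mul_of_nonneg_right (Kk_abs_le hα hy hz) (norm_nonneg _)

lemma rep (hα : 0 < α) (hω : IntegrableOn ω (Set.Ioi 0))
    (hφ : ∀ z : ℝ, φ z =
      (∫ y in (0 : ℝ)..z,
        (-(1 / (2 * α)) * (Real.exp (-α * (z - y)) - Real.exp (-α * (y + z)))) * ω y) +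
      ∫ y in Set.Ioi z,
        (-(1 / (2 * α)) * (Real.exp (α * (z - y)) - Real.exp (-α * (y + z)))) * ω y)
    {z : ℝ} (hz : 0 ≤ z) :
    φ z = ∫ y in Set.Ioi (0:ℝ), Kk α y z * ω y := by
  have hint : IntegrableOn (fun y => Kk α y z * ω y) (Set.Ioi 0) volume := Kk_int hα hω hz
  have h1 : (∫ y in (0 : ℝ)..z,
      (-(1 / (2 * α)) * (Real.exp (-α * (z - y)) - Real.exp (-α * (y + z)))) * ω y)
      = ∫ y in Set.Ioc (0:ℝ) z, Kk α y z * ω y := by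
    rw [intervalIntegral.integral_of_le hz]
    refine setIntegral_congr_fun measurableSet_Ioc fun y hy => ?_
    have : |z - y| = z - y := abs_of_nonneg (by linarith [hy.2])
    unfold Kk; rw [this]
  have h2 : (∫ y in Set.Ioi z,
      (-(1 / (2 * α)) * (Real.exp (α * (z - y)) - Real.exp (-α * (y + z)))) * ω y)
      = ∫ y in Set.Ioi z, Kk α y z * ω y := by
    refine setIntegral_congr_fun measurableSet_Ioi fun y hy => ?_
    have h3 : |z - y| = y - z := by
      rw [abs_of_nonpos (by simp at hy; linarith)]; ring
    unfold Kk; rw [h3, show -α * (y - z) = α * (z - y) by ring]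
  rw [hφ z, h1, h2, ← setIntegral_union (Set.Ioc_disjoint_Ioi le_rfl) measurableSet_Ioi
    (hint.mono_set Set.Ioc_subset_Ioi_self) (hint.mono_set (Set.Ioi_subset_Ioi hz)),
    Set.Ioc_union_Ioi_eq_Ioi hz]

lemma derivI (hα : 0 < α) (hω : IntegrableOn ω (Set.Ioi 0)) {z₀ : ℝ} (hz₀ : 0 ≤ z₀) :
    HasDerivAt (fun z => ∫ y in Set.Ioi (0:ℝ), Kk α y z * ω y)
      (∫ y in Set.Ioi (0:ℝ), Dk α y z₀ * ω y) z₀ := by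
  have hKint := Kk_int hα hω hz₀
  have hne : ∀ᵐ y ∂(volume.restrict (Set.Ioi (0:ℝ))), y ≠ z₀ := by
    refine ae_restrict_of_ae ?_
    rw [ae_iff]
    have : {a : ℝ | ¬a ≠ z₀} = {z₀} := by ext a; simp
    rw [this]
    exact measure_singleton z₀
  refine (hasDerivAt_integral_of_dominated_loc_of_lip (F := fun z y => Kk α y z * ω y)
    (F' := fun y => Dk α y z₀ * ω y) (bound := fun y => (1 + Real.exp α)/2 * |ω y|)
    (Metric.ball_mem_nhds z₀ one_pos) ?_ hKint ?_ ?_ ((hω.norm.const_mul ((1 + Real.exp α)/2))) ?_).2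
  · exact Eventually.of_forall fun x =>
      ((by unfold Kk; fun_prop : Continuous fun y => Kk α y x).aestronglyMeasurable).mul
        hω.aestronglyMeasurable
  · exact (Dk_meas α z₀).aestronglyMeasurable.mul hω.aestronglyMeasurable
  · -- Lipschitz
    refine (ae_restrict_iff' measurableSet_Ioi).2 (ae_of_all _ fun y hy => ?_)
    have hy0 : (0:ℝ) < y := hy
    apply LipschitzOnWith.of_dist_le_mul
    intro z₁ h₁ z₂ h₂
    rw [Real.dist_eq, Real.dist_eq, Real.coe_nnabs]
    have hd1 : |z₁ - z₀| < 1 := by rw [← Real.dist_eq]; exact mem_ball.1 h₁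
    have hd2 : |z₂ - z₀| < 1 := by rw [← Real.dist_eq]; exact mem_ball.1 h₂
    have hz1 : z₀ - 1 < z₁ := by have := abs_lt.1 hd1; linarith [this.1]
    have hz2 : z₀ - 1 < z₂ := by have := abs_lt.1 hd2; linarith [this.1]
    have t1 : |Real.exp (-α * |z₁ - y|) - Real.exp (-α * |z₂ - y|)| ≤ α * |z₁ - z₂| := by
      have h0 := exp_lip 0 (-α * |z₁ - y|) (-α * |z₂ - y|)
        (by nlinarith [abs_nonneg (z₁ - y)]) (by nlinarith [abs_nonneg (z₂ - y)])
      rw [Real.exp_zero, one_mul] at h0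
      refine h0.trans ?_
      have he : |(-α * |z₁ - y|) - (-α * |z₂ - y|)| = α * abs (|z₁ - y| - |z₂ - y|) := by
        rw [show (-α * |z₁ - y|) - (-α * |z₂ - y|) = -α * (|z₁ - y| - |z₂ - y|) by ring,
          abs_mul, abs_neg, abs_of_pos hα]
      rw [he]
      refine mul_le_mul_of_nonneg_left ?_ hα.le
      have := abs_abs_sub_abs_le_abs_sub (z₁ - y) (z₂ - y)
      simpa using this
    have t2 : |Real.exp (-α * (y + z₁)) - Real.exp (-α * (y + z₂))|
        ≤ Real.exp α * (α * |z₁ - z₂|) := by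
      have h0 := exp_lip α (-α * (y + z₁)) (-α * (y + z₂))
        (by nlinarith) (by nlinarith)
      refine h0.trans ?_
      have he : |(-α * (y + z₁)) - (-α * (y + z₂))| = α * |z₁ - z₂| := by
        rw [show (-α * (y + z₁)) - (-α * (y + z₂)) = -α * (z₁ - z₂) by ring,
          abs_mul, abs_neg, abs_of_pos hα]
      rw [he]
    have hK : Kk α y z₁ * ω y - Kk α y z₂ * ω y =
        (-(1/(2*α)) * ((Real.exp (-α * |z₁ - y|) - Real.exp (-α * |z₂ - y|))
          - (Real.exp (-α * (y + z₁)) - Real.exp (-α * (y + z₂))))) * ω y := by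
      unfold Kk; ring
    show |Kk α y z₁ * ω y - Kk α y z₂ * ω y| ≤ abs ((1 + Real.exp α)/2 * |ω y|) * |z₁ - z₂|
    rw [hK, abs_mul, abs_mul, abs_neg, abs_of_pos (show (0:ℝ) < 1/(2*α) by positivity)]
    have habs : |(Real.exp (-α * |z₁ - y|) - Real.exp (-α * |z₂ - y|))
          - (Real.exp (-α * (y + z₁)) - Real.exp (-α * (y + z₂)))|
        ≤ α * |z₁ - z₂| + Real.exp α * (α * |z₁ - z₂|) :=
      (abs_sub _ _).trans (add_le_add t1 t2)
    have hfin : (1/(2*α)) * (α * |z₁ - z₂| + Real.exp α * (α * |z₁ - z₂|))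
        = (1 + Real.exp α)/2 * |z₁ - z₂| := by
      field_simp
    have hmono := mul_le_mul_of_nonneg_left habs (show (0:ℝ) ≤ 1/(2*α) by positivity)
    have hrw : abs ((1 + Real.exp α)/2 * |ω y|) = (1 + Real.exp α)/2 * |ω y| := by
      rw [abs_of_nonneg (by positivity)]
    rw [hrw]
    have step : (1/(2*α)) * |(Real.exp (-α * |z₁ - y|) - Real.exp (-α * |z₂ - y|))
          - (Real.exp (-α * (y + z₁)) - Real.exp (-α * (y + z₂)))|
        ≤ (1 + Real.exp α)/2 * |z₁ - z₂| := by
      rw [← hfin]; exact hmono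
    calc (1/(2*α)) * |(Real.exp (-α * |z₁ - y|) - Real.exp (-α * |z₂ - y|))
          - (Real.exp (-α * (y + z₁)) - Real.exp (-α * (y + z₂)))| * |ω y|
        ≤ ((1 + Real.exp α)/2 * |z₁ - z₂|) * |ω y| :=
          mul_le_mul_of_nonneg_right step (abs_nonneg _)
      _ = (1 + Real.exp α)/2 * |ω y| * |z₁ - z₂| := by ring
  · -- a.e. differentiability
    filter_upwards [hne] with y hy
    rcases lt_or_gt_of_ne hy with hlt | hgt
    · have hev : (fun z => Kk α y z) =ᶠ[𝓝 z₀]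
          (fun z => -(1/(2*α)) * (Real.exp (-α*(z-y)) - Real.exp (-α*(y+z)))) := by
        filter_upwards [Ioi_mem_nhds hlt] with z hz
        unfold Kk
        rw [abs_of_pos (sub_pos.2 hz)]
      have d1 : HasDerivAt (fun z => -α*(z-y)) (-α) z₀ := by
        simpa using ((hasDerivAt_id z₀).sub_const y).const_mul (-α)
      have d2 : HasDerivAt (fun z => -α*(y+z)) (-α) z₀ := by
        simpa using ((hasDerivAt_id z₀).const_add y).const_mul (-α)
      have hd := (d1.exp.sub d2.exp).const_mul (-(1/(2*α)))
      have hval : -(1/(2*α)) * (Real.exp (-α*(z₀-y)) * (-α) - Real.exp (-α*(y+z₀)) * (-α))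
          = Dk α y z₀ := by
        unfold Dk
        rw [if_pos hlt.le]
        field_simp
        ring
      rw [hval] at hd
      exact (hd.congr_of_eventuallyEq hev).mul_const (ω y)
    · have hev : (fun z => Kk α y z) =ᶠ[𝓝 z₀]
          (fun z => -(1/(2*α)) * (Real.exp (-α*(y-z)) - Real.exp (-α*(y+z)))) := by
        filter_upwards [Iio_mem_nhds hgt] with z hz
        unfold Kk
        rw [abs_of_neg (sub_neg.2 hz), show -(z - y) = y - z by ring]
      have d1 : HasDerivAt (fun z => -α*(y-z)) α z₀ := by
        simpa using ((hasDerivAt_id z₀).const_sub y).const_mul (-α)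
      have d2 : HasDerivAt (fun z => -α*(y+z)) (-α) z₀ := by
        simpa using ((hasDerivAt_id z₀).const_add y).const_mul (-α)
      have hd := (d1.exp.sub d2.exp).const_mul (-(1/(2*α)))
      have hval : -(1/(2*α)) * (Real.exp (-α*(y-z₀)) * α - Real.exp (-α*(y+z₀)) * (-α))
          = Dk α y z₀ := by
        unfold Dk
        rw [if_neg (not_le.2 hgt)]
        field_simp
        ring
      rw [hval] at hd
      exact (hd.congr_of_eventuallyEq hev).mul_const (ω y)

lemma Eint (hα : 0 < α) (hω : IntegrableOn ω (Set.Ioi 0)) :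
    IntegrableOn (fun y => Real.exp (-α * y) * ω y) (Set.Ioi 0) volume := by
  apply Integrable.mono' hω.norm
  · exact ((by fun_prop : Continuous fun y => Real.exp (-α*y)).aestronglyMeasurable).mul
      hω.aestronglyMeasurable
  · refine (ae_restrict_iff' measurableSet_Ioi).2 (ae_of_all _ fun y hy => ?_)
    have hy0 : (0:ℝ) < y := hy
    rw [norm_mul, Real.norm_eq_abs, Real.norm_eq_abs, abs_of_pos (Real.exp_pos _)]
    have h1 : Real.exp (-α * y) ≤ 1 := by
      apply Real.exp_le_one_iff.2; nlinarith
    nlinarith [abs_nonneg (ω y), Real.exp_pos (-α * y)]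

lemma Esplit (hα : 0 < α) (hω : IntegrableOn ω (Set.Ioi 0)) {z : ℝ} (hz : 0 ≤ z) :
    (∫ y in Set.Ioi z, Real.exp (-α * y) * ω y)
      = (∫ y in Set.Ioi (0:ℝ), Real.exp (-α * y) * ω y)
        - ∫ y in (0:ℝ)..z, Real.exp (-α * y) * ω y := by
  have hint := Eint hα hω
  rw [intervalIntegral.integral_of_le hz, eq_sub_iff_add_eq, add_comm,
    ← setIntegral_union (Set.Ioc_disjoint_Ioi le_rfl) measurableSet_Ioi
      (hint.mono_set Set.Ioc_subset_Ioi_self) (hint.mono_set (Set.Ioi_subset_Ioi hz)),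
    Set.Ioc_union_Ioi_eq_Ioi hz]

lemma psiPQ (hα : 0 < α) (hω : IntegrableOn ω (Set.Ioi 0)) (hc : Continuous ω)
    {z : ℝ} (hz : 0 < z) :
    (∫ y in Set.Ioi (0:ℝ), Dk α y z * ω y)
      = ((1/2) * Real.exp (-α*z)) * (∫ y in (0:ℝ)..z, Real.exp (α*y) * ω y)
        + ((1/2) * Real.exp (α*z)) * (∫ y in (0:ℝ)..z, Real.exp (-α*y) * ω y)
        - ((1/2) * (Real.exp (α*z) + Real.exp (-α*z)))
            * ∫ y in Set.Ioi (0:ℝ), Real.exp (-α*y) * ω y := by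
  have hint := Eint hα hω
  have hDint : IntegrableOn (fun y => Dk α y z * ω y) (Set.Ioi 0) volume := by
    apply Integrable.mono' hω.norm
    · exact (Dk_meas α z).aestronglyMeasurable.mul hω.aestronglyMeasurable
    · refine (ae_restrict_iff' measurableSet_Ioi).2 (ae_of_all _ fun y hy => ?_)
      have hy0 : (0:ℝ) < y := hy
      rw [norm_mul, Real.norm_eq_abs, Real.norm_eq_abs]
      have hb : |Dk α y z| ≤ 1 := Dk_abs_le hα hy0 hz.le
      nlinarith [abs_nonneg (ω y), abs_nonneg (Dk α y z)]
  have hsplit : (∫ y in Set.Ioi (0:ℝ), Dk α y z * ω y)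
      = (∫ y in Set.Ioc (0:ℝ) z, Dk α y z * ω y) + ∫ y in Set.Ioi z, Dk α y z * ω y := by
    rw [← setIntegral_union (Set.Ioc_disjoint_Ioi le_rfl) measurableSet_Ioi
      (hDint.mono_set Set.Ioc_subset_Ioi_self) (hDint.mono_set (Set.Ioi_subset_Ioi hz.le)),
      Set.Ioc_union_Ioi_eq_Ioi hz.le]
  have h1 : (∫ y in Set.Ioc (0:ℝ) z, Dk α y z * ω y)
      = ((1/2) * Real.exp (-α*z)) * (∫ y in (0:ℝ)..z, Real.exp (α*y) * ω y)
        - ((1/2) * Real.exp (-α*z)) * (∫ y in (0:ℝ)..z, Real.exp (-α*y) * ω y) := by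
    have e1 : ∀ y ∈ Set.Ioc (0:ℝ) z, Dk α y z * ω y
        = ((1/2) * Real.exp (-α*z)) * (Real.exp (α*y) * ω y)
          - ((1/2) * Real.exp (-α*z)) * (Real.exp (-α*y) * ω y) := by
      intro y hy
      unfold Dk
      rw [if_pos hy.2,
        show -α * (z - y) = -α*z + α*y by ring, show -α * (y + z) = -α*z + -α*y by ring,
        Real.exp_add, Real.exp_add]
      ring
    rw [setIntegral_congr_fun measurableSet_Ioc e1, ← intervalIntegral.integral_of_le hz.le,
      intervalIntegral.integral_sub
        ((by fun_prop : Continuous fun y =>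
          ((1/2) * Real.exp (-α*z)) * (Real.exp (α*y) * ω y)).intervalIntegrable 0 z)
        ((by fun_prop : Continuous fun y =>
          ((1/2) * Real.exp (-α*z)) * (Real.exp (-α*y) * ω y)).intervalIntegrable 0 z),
      intervalIntegral.integral_const_mul, intervalIntegral.integral_const_mul]
  have h2 : (∫ y in Set.Ioi z, Dk α y z * ω y)
      = (-(1/2) * Real.exp (α*z)) * (∫ y in Set.Ioi z, Real.exp (-α*y) * ω y)
        + (-(1/2) * Real.exp (-α*z)) * (∫ y in Set.Ioi z, Real.exp (-α*y) * ω y) := by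
    have e2 : ∀ y ∈ Set.Ioi z, Dk α y z * ω y
        = (-(1/2) * Real.exp (α*z)) * (Real.exp (-α*y) * ω y)
          + (-(1/2) * Real.exp (-α*z)) * (Real.exp (-α*y) * ω y) := by
      intro y hy
      unfold Dk
      rw [if_neg (not_le.2 hy),
        show -α * (y - z) = α*z + -α*y by ring, show -α * (y + z) = -α*z + -α*y by ring,
        Real.exp_add, Real.exp_add]
      ring
    rw [setIntegral_congr_fun measurableSet_Ioi e2, integral_add, integral_const_mul,
      integral_const_mul]
    · exact (hint.mono_set (Set.Ioi_subset_Ioi hz.le)).const_mul _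
    · exact (hint.mono_set (Set.Ioi_subset_Ioi hz.le)).const_mul _
  rw [hsplit, h1, h2, Esplit hα hω hz.le]
  ring

lemma phiPQ (hα : 0 < α) (hω : IntegrableOn ω (Set.Ioi 0)) (hc : Continuous ω)
    (hφ : ∀ z : ℝ, φ z =
      (∫ y in (0 : ℝ)..z,
        (-(1 / (2 * α)) * (Real.exp (-α * (z - y)) - Real.exp (-α * (y + z)))) * ω y) +
      ∫ y in Set.Ioi z,
        (-(1 / (2 * α)) * (Real.exp (α * (z - y)) - Real.exp (-α * (y + z)))) * ω y)
    {z : ℝ} (hz : 0 < z) :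
    α * φ z = -((1/2) * Real.exp (-α*z)) * (∫ y in (0:ℝ)..z, Real.exp (α*y) * ω y)
        + ((1/2) * Real.exp (α*z)) * (∫ y in (0:ℝ)..z, Real.exp (-α*y) * ω y)
        - ((1/2) * (Real.exp (α*z) - Real.exp (-α*z)))
            * ∫ y in Set.Ioi (0:ℝ), Real.exp (-α*y) * ω y := by
  have hEint := Eint hα hω
  have h1 : (∫ y in (0 : ℝ)..z,
      (-(1 / (2 * α)) * (Real.exp (-α * (z - y)) - Real.exp (-α * (y + z)))) * ω y)
      = (-(1/(2*α)) * Real.exp (-α*z)) * (∫ y in (0:ℝ)..z, Real.exp (α*y) * ω y)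
        + ((1/(2*α)) * Real.exp (-α*z)) * (∫ y in (0:ℝ)..z, Real.exp (-α*y) * ω y) := by
    rw [intervalIntegral.integral_congr (g := fun y =>
        (-(1/(2*α)) * Real.exp (-α*z)) * (Real.exp (α*y) * ω y)
          + ((1/(2*α)) * Real.exp (-α*z)) * (Real.exp (-α*y) * ω y))
      (fun y _ => by
        rw [show -α * (z - y) = -α*z + α*y by ring, show -α * (y + z) = -α*z + -α*y by ring,
          Real.exp_add, Real.exp_add]
        ring),
      intervalIntegral.integral_add
        ((by fun_prop : Continuous fun y =>
          (-(1/(2*α)) * Real.exp (-α*z)) * (Real.exp (α*y) * ω y)).intervalIntegrable 0 z)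
        ((by fun_prop : Continuous fun y =>
          ((1/(2*α)) * Real.exp (-α*z)) * (Real.exp (-α*y) * ω y)).intervalIntegrable 0 z),
      intervalIntegral.integral_const_mul, intervalIntegral.integral_const_mul]
  have h2 : (∫ y in Set.Ioi z,
      (-(1 / (2 * α)) * (Real.exp (α * (z - y)) - Real.exp (-α * (y + z)))) * ω y)
      = (-(1/(2*α)) * Real.exp (α*z)) * (∫ y in Set.Ioi z, Real.exp (-α*y) * ω y)
        + ((1/(2*α)) * Real.exp (-α*z)) * (∫ y in Set.Ioi z, Real.exp (-α*y) * ω y) := by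
    rw [setIntegral_congr_fun measurableSet_Ioi (g := fun y =>
        (-(1/(2*α)) * Real.exp (α*z)) * (Real.exp (-α*y) * ω y)
          + ((1/(2*α)) * Real.exp (-α*z)) * (Real.exp (-α*y) * ω y))
      (fun y _ => by
        rw [show α * (z - y) = α*z + -α*y by ring, show -α * (y + z) = -α*z + -α*y by ring,
          Real.exp_add, Real.exp_add]
        ring),
      integral_add ((hEint.mono_set (Set.Ioi_subset_Ioi hz.le)).const_mul _)
        ((hEint.mono_set (Set.Ioi_subset_Ioi hz.le)).const_mul _),
      integral_const_mul, integral_const_mul]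
  rw [hφ z, mul_add, h1, h2, Esplit hα hω hz.le]
  field_simp
  ring

end LaplaceModeAux

open LaplaceModeAux in
/-- One-dimensional elliptic estimate: the Green's function representation of
the solution to `φ'' - α²φ = ω` on `(0,∞)` with `φ(0) = 0` satisfies
`|αφ| ≤ ‖ω‖_{L¹}` and `|φ'| ≤ ‖ω‖_{L¹}`, and solves the equation when `ω` is
continuous. -/
theorem laplace_mode_estimate (α : ℝ) (hα : 0 < α) (ω : ℝ → ℝ)
    (hω : IntegrableOn ω (Set.Ioi 0)) (φ : ℝ → ℝ)
    (hφ : ∀ z : ℝ, φ z =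
      (∫ y in (0 : ℝ)..z,
        (-(1 / (2 * α)) * (Real.exp (-α * (z - y)) - Real.exp (-α * (y + z)))) * ω y) +
      ∫ y in Set.Ioi z,
        (-(1 / (2 * α)) * (Real.exp (α * (z - y)) - Real.exp (-α * (y + z)))) * ω y) :
    φ 0 = 0 ∧
    (∀ z : ℝ, 0 ≤ z → |α * φ z| ≤ ∫ y in Set.Ioi (0 : ℝ), |ω y|) ∧
    (∀ z : ℝ, 0 ≤ z → |deriv φ z| ≤ ∫ y in Set.Ioi (0 : ℝ), |ω y|) ∧
    (Continuous ω → ∀ z : ℝ, 0 < z →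
      deriv (deriv φ) z - α ^ 2 * φ z = ω z) := by
  have hωnn : (0:ℝ) ≤ ∫ y in Set.Ioi (0:ℝ), |ω y| :=
    MeasureTheory.integral_nonneg fun y => abs_nonneg _
  -- bound for the derivative integral
  have hψbound : ∀ z : ℝ, 0 ≤ z →
      |∫ y in Set.Ioi (0:ℝ), Dk α y z * ω y| ≤ ∫ y in Set.Ioi (0:ℝ), |ω y| := by
    intro z hz
    have h := MeasureTheory.norm_integral_le_of_norm_le (μ := volume.restrict (Set.Ioi 0))
      (f := fun y => Dk α y z * ω y) (g := fun y => |ω y|) hω.norm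
      ((MeasureTheory.ae_restrict_iff' measurableSet_Ioi).2 (ae_of_all _ fun y hy => by
        rw [norm_mul, Real.norm_eq_abs, Real.norm_eq_abs]
        nlinarith [Dk_abs_le hα (show (0:ℝ) < y from hy) hz, abs_nonneg (ω y),
          abs_nonneg (Dk α y z)]))
    simpa using h
  -- derivative formula for z > 0
  have hderiv : ∀ z : ℝ, 0 < z → deriv φ z = ∫ y in Set.Ioi (0:ℝ), Dk α y z * ω y := by
    intro z hz
    have hI := derivI hα hω hz.le
    have hev : φ =ᶠ[nhds z] (fun w => ∫ y in Set.Ioi (0:ℝ), Kk α y w * ω y) := by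
      filter_upwards [Ioi_mem_nhds hz] with w hw
      exact rep hα hω hφ (le_of_lt hw)
    exact (hI.congr_of_eventuallyEq hev).deriv
  refine ⟨?_, ?_, ?_, ?_⟩
  · -- φ 0 = 0
    have hzero : ∀ y : ℝ,
        (-(1 / (2 * α)) * (Real.exp (α * (0 - y)) - Real.exp (-α * (y + 0)))) * ω y = 0 := by
      intro y
      rw [show α * (0 - y) = -α * (y + 0) by ring]
      ring
    rw [hφ 0, intervalIntegral.integral_same, zero_add]
    simp only [hzero]
    simp
  · -- |αφ| bound
    intro z hz
    rw [rep hα hω hφ hz]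
    have h := MeasureTheory.norm_integral_le_of_norm_le (μ := volume.restrict (Set.Ioi 0))
      (f := fun y => Kk α y z * ω y) (g := fun y => (1/(2*α)) * |ω y|)
      (hω.norm.const_mul (1/(2*α)))
      ((MeasureTheory.ae_restrict_iff' measurableSet_Ioi).2 (ae_of_all _ fun y hy => by
        rw [norm_mul, Real.norm_eq_abs, Real.norm_eq_abs]
        exact mul_le_mul_of_nonneg_right (Kk_abs_le hα (show (0:ℝ) < y from hy) hz)
          (abs_nonneg _)))
    rw [MeasureTheory.integral_const_mul] at h
    have h2 : |∫ y in Set.Ioi (0:ℝ), Kk α y z * ω y|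
        ≤ 1/(2*α) * ∫ y in Set.Ioi (0:ℝ), |ω y| := by simpa using h
    rw [abs_mul, abs_of_pos hα]
    have h3 : α * |∫ y in Set.Ioi (0:ℝ), Kk α y z * ω y|
        ≤ α * (1/(2*α) * ∫ y in Set.Ioi (0:ℝ), |ω y|) :=
      mul_le_mul_of_nonneg_left h2 hα.le
    have h4 : α * (1/(2*α) * ∫ y in Set.Ioi (0:ℝ), |ω y|)
        = (∫ y in Set.Ioi (0:ℝ), |ω y|)/2 := by
      field_simp
    linarith
  · -- |φ'| bound
    intro z hz
    rcases eq_or_lt_of_le hz with rfl | hzpos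
    · by_cases hdiff : DifferentiableAt ℝ φ 0
      · have hI := derivI hα hω (le_refl (0:ℝ))
        have hW : HasDerivWithinAt φ (∫ y in Set.Ioi (0:ℝ), Dk α y 0 * ω y) (Set.Ici 0) 0 :=
          (hI.hasDerivWithinAt).congr (fun u hu => rep hα hω hφ hu)
            (rep hα hω hφ le_rfl)
        have h2 : HasDerivWithinAt φ (deriv φ 0) (Set.Ici 0) 0 :=
          hdiff.hasDerivAt.hasDerivWithinAt
        have := (uniqueDiffOn_Ici (0:ℝ) 0 Set.self_mem_Ici).eq_deriv _ h2 hW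
        rw [this]
        exact hψbound 0 le_rfl
      · rw [deriv_zero_of_not_differentiableAt hdiff, abs_zero]
        exact hωnn
    · rw [hderiv z hzpos]
      exact hψbound z hzpos.le
  · -- the ODE
    intro hc z hz
    set E := ∫ y in Set.Ioi (0:ℝ), Real.exp (-α*y) * ω y with hE
    have hev2 : deriv φ =ᶠ[nhds z] (fun w =>
        ((1/2) * Real.exp (-α*w)) * (∫ y in (0:ℝ)..w, Real.exp (α*y) * ω y)
          + ((1/2) * Real.exp (α*w)) * (∫ y in (0:ℝ)..w, Real.exp (-α*y) * ω y)
          - ((1/2) * (Real.exp (α*w) + Real.exp (-α*w))) * E) := by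
      filter_upwards [Ioi_mem_nhds hz] with w hw
      rw [hderiv w hw, psiPQ hα hω hc hw]
    have hP : HasDerivAt (fun w => ∫ y in (0:ℝ)..w, Real.exp (α*y) * ω y)
        (Real.exp (α*z) * ω z) z := by
      have hcont : Continuous fun y => Real.exp (α*y) * ω y := by fun_prop
      exact intervalIntegral.integral_hasDerivAt_right (hcont.intervalIntegrable 0 z)
        (hcont.stronglyMeasurableAtFilter _ _) hcont.continuousAt
    have hQ : HasDerivAt (fun w => ∫ y in (0:ℝ)..w, Real.exp (-α*y) * ω y)
        (Real.exp (-α*z) * ω z) z := by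
      have hcont : Continuous fun y => Real.exp (-α*y) * ω y := by fun_prop
      exact intervalIntegral.integral_hasDerivAt_right (hcont.intervalIntegrable 0 z)
        (hcont.stronglyMeasurableAtFilter _ _) hcont.continuousAt
    have e1 : HasDerivAt (fun w => Real.exp (-α*w)) (Real.exp (-α*z) * (-α)) z := by
      have : HasDerivAt (fun w : ℝ => -α*w) (-α) z := by
        simpa using (hasDerivAt_id z).const_mul (-α)
      exact this.exp
    have e2 : HasDerivAt (fun w => Real.exp (α*w)) (Real.exp (α*z) * α) z := by
      have : HasDerivAt (fun w : ℝ => α*w) α z := by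
        simpa using (hasDerivAt_id z).const_mul α
      exact this.exp
    have c1 : HasDerivAt (fun w => (1/2) * Real.exp (-α*w))
        ((1/2) * (Real.exp (-α*z) * (-α))) z := e1.const_mul (1/2)
    have c2 : HasDerivAt (fun w => (1/2) * Real.exp (α*w))
        ((1/2) * (Real.exp (α*z) * α)) z := e2.const_mul (1/2)
    have c3 : HasDerivAt (fun w => (1/2) * (Real.exp (α*w) + Real.exp (-α*w)))
        ((1/2) * (Real.exp (α*z) * α + Real.exp (-α*z) * (-α))) z :=
      (e2.add e1).const_mul (1/2)
    have hΨ := ((c1.mul hP).add (c2.mul hQ)).sub (c3.mul_const E)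
    have hmul : Real.exp (-α*z) * Real.exp (α*z) = 1 := by
      rw [← Real.exp_add]; simp
    have hval : ((1/2) * (Real.exp (-α*z) * (-α))
          * (∫ y in (0:ℝ)..z, Real.exp (α*y) * ω y)
        + (1/2) * Real.exp (-α*z) * (Real.exp (α*z) * ω z))
        + ((1/2) * (Real.exp (α*z) * α) * (∫ y in (0:ℝ)..z, Real.exp (-α*y) * ω y)
          + (1/2) * Real.exp (α*z) * (Real.exp (-α*z) * ω z))
        - ((1/2) * (Real.exp (α*z) * α + Real.exp (-α*z) * (-α))) * E
        = ω z + α^2 * φ z := by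
      have hφPQ := phiPQ hα hω hc hφ hz
      rw [← hE] at hφPQ
      linear_combination (-α) * hφPQ + ω z * hmul
    rw [hval] at hΨ
    have h6 : deriv (fun w =>
        ((1/2) * Real.exp (-α*w)) * (∫ y in (0:ℝ)..w, Real.exp (α*y) * ω y)
          + ((1/2) * Real.exp (α*w)) * (∫ y in (0:ℝ)..w, Real.exp (-α*y) * ω y)
          - ((1/2) * (Real.exp (α*w) + Real.exp (-α*w))) * E) z = ω z + α^2 * φ z :=
      hΨ.deriv
    rw [hev2.deriv_eq, h6]
    ring
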